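/- Let c = 1/4 + i·√15/4. The 9×9 complex matrix W₉, with rows and columns indexed by the finite field F₉ with nine elements, defined by (W₉)_{x,x} = 1, (W₉)_{x,y} = c if x ≠ y and x−y is a nonzero square in F₉, and (W₉)_{x,y} = conj(c) if x ≠ y and x−y is a non-square in F₉, is a complex Hadamard matrix of order 9. -/

import Mathlib

open Matrix

/-- `H` is a complex Hadamard matrix: unimodular entries and `H Hᴴ = n • I`. -/
def IsCHadamard {n : Type*} [Fintype n] [DecidableEq n] (H : Matrix n n ℂ) : Prop :=
  (∀ i j, ‖H i j‖ = 1) ∧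
    H * H.conjTranspose = (Fintype.card n : ℂ) • 1

lemma aux_quad_sum {F : Type} [Field F] [Fintype F] [DecidableEq F]
    (hF : ringChar F ≠ 2) {d : F} (hd : d ≠ 0) :
    ∑ a : F, quadraticChar F a * quadraticChar F (a - d) = -1 := by
  classical
  have h0 := Finset.sum_erase_add Finset.univ
    (fun a : F => quadraticChar F a * quadraticChar F (a - d)) (Finset.mem_univ (0 : F))
  simp only [quadraticChar_zero, zero_mul, add_zero] at h0
  have h1 : ∑ a ∈ Finset.univ.erase (0 : F),
        quadraticChar F a * quadraticChar F (a - d)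
      = ∑ b ∈ Finset.univ.erase (1 : F), quadraticChar F b := by
    refine Finset.sum_nbij' (fun a => 1 - d * a⁻¹) (fun b => d * (1 - b)⁻¹)
      ?_ ?_ ?_ ?_ ?_
    · intro a ha
      have ha0 : a ≠ 0 := (Finset.mem_erase.mp ha).1
      simp only [Finset.mem_erase, Finset.mem_univ, and_true]
      intro h
      apply hd
      have hda : d * a⁻¹ = 0 := by linear_combination -h
      rcases mul_eq_zero.mp hda with h' | h'
      · exact h'
      · exact absurd (inv_eq_zero.mp h') ha0
    · intro b hb
      have hb1 : b ≠ 1 := (Finset.mem_erase.mp hb).1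
      simp only [Finset.mem_erase, Finset.mem_univ, and_true]
      have h1b : (1 : F) - b ≠ 0 := sub_ne_zero.mpr (Ne.symm hb1)
      exact mul_ne_zero hd (inv_ne_zero h1b)
    · intro a ha
      have ha0 : a ≠ 0 := (Finset.mem_erase.mp ha).1
      field_simp
      rw [sub_sub_cancel, div_self hd]
    · intro b hb
      have hb1 : b ≠ 1 := (Finset.mem_erase.mp hb).1
      have h1b : (1 : F) - b ≠ 0 := sub_ne_zero.mpr (Ne.symm hb1)
      field_simp
      ring
    · intro a ha
      have ha0 : a ≠ 0 := (Finset.mem_erase.mp ha).1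
      rw [← _root_.map_mul]
      have hid : a * (a - d) = a ^ 2 * (1 - d * a⁻¹) := by field_simp
      rw [hid, _root_.map_mul, quadraticChar_sq_one' ha0, one_mul]
  have h2 : ∑ b ∈ Finset.univ.erase (1 : F), quadraticChar F b
      + quadraticChar F (1 : F) = ∑ b : F, quadraticChar F b :=
    Finset.sum_erase_add _ _ (Finset.mem_univ _)
  have h3 : ∑ b : F, quadraticChar F b = 0 := quadraticChar_sum_zero hF
  have h4 : quadraticChar F (1 : F) = 1 := map_one _
  rw [← h0, h1]
  rw [h3, h4] at h2
  linarith

theorem stmt18 (F : Type) [Field F] [Fintype F] [DecidableEq F]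
    (hcard : Fintype.card F = 9)
    (c : ℂ) (hc : c = 1/4 + Complex.I * (Real.sqrt 15 / 4)) :
    IsCHadamard (Matrix.of fun x y : F =>
      if x = y then (1 : ℂ)
      else if ∃ w : F, w ^ 2 = x - y then c else (starRingEnd ℂ) c) := by
  classical
  set β : ℂ := Complex.I * (Real.sqrt 15 / 4) with hβ
  have hF2 : ringChar F ≠ 2 := by
    intro h
    have := FiniteField.even_card_iff_char_two.mp h
    rw [hcard] at this
    omega
  have hχ0 : ((quadraticChar F (0 : F) : ℤ) : ℂ) = 0 := by
    simp [quadraticChar_zero]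
  have h15 : ((Real.sqrt 15 : ℝ) : ℂ) ^ 2 = 15 := by
    rw [show ((Real.sqrt 15 : ℝ) : ℂ) ^ 2 = (((Real.sqrt 15 ^ 2 : ℝ)) : ℂ) by push_cast; ring]
    rw [Real.sq_sqrt (by norm_num : (15:ℝ) ≥ 0)]
    norm_num
  have hβsq : β ^ 2 = -(15/16) := by
    rw [hβ, mul_pow, Complex.I_sq, div_pow, h15]
    norm_num
  have hconj14 : (starRingEnd ℂ) (1/4 : ℂ) = 1/4 :=
    Complex.conj_eq_iff_im.mpr (by norm_num)
  have hconj34 : (starRingEnd ℂ) (3/4 : ℂ) = 3/4 :=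
    Complex.conj_eq_iff_im.mpr (by norm_num)
  have hβconj : (starRingEnd ℂ) β = -β := by
    have hr : (starRingEnd ℂ) (((Real.sqrt 15 : ℝ) : ℂ) / 4) = ((Real.sqrt 15 : ℝ) : ℂ) / 4 :=
      Complex.conj_eq_iff_im.mpr (by simp)
    rw [hβ, _root_.map_mul, Complex.conj_I, hr]
    ring
  have hcconj : (starRingEnd ℂ) c = 1/4 - β := by
    rw [hc, map_add, hβconj, hconj14]
    ring
  have hcval : c = 1/4 + β := by rw [hc, hβ]
  have hm1' : quadraticChar F (-1 : F) = 1 := by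
    have hsq : IsSquare (-1 : F) := by
      rw [FiniteField.isSquare_neg_one_iff, hcard]
      omega
    have hne : (-1 : F) ≠ 0 := by simp
    exact (quadraticChar_one_iff_isSquare hne).mpr hsq
  have hχneg : ∀ s : F, quadraticChar F (-s) = quadraticChar F s := by
    intro s
    rw [show (-s : F) = -1 * s by ring, _root_.map_mul, hm1', one_mul]
  set M : Matrix F F ℂ := Matrix.of fun x y : F =>
      if x = y then (1 : ℂ)
      else if ∃ w : F, w ^ 2 = x - y then c else (starRingEnd ℂ) c with hM
  have hA : ∀ x z : F, M x z
      = 1/4 + ((quadraticChar F (x - z) : ℤ) : ℂ) * β + (if x = z then (3/4 : ℂ) else 0) := by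
    intro x z
    rw [hM, Matrix.of_apply]
    by_cases h : x = z
    · rw [if_pos h, if_pos h, h, sub_self, hχ0]
      ring
    · rw [if_neg h, if_neg h]
      have hs : x - z ≠ 0 := sub_ne_zero.mpr h
      rcases quadraticChar_dichotomy hs with h1 | h1
      · have hex : ∃ w : F, w ^ 2 = x - z := by
          rcases (quadraticChar_one_iff_isSquare hs).mp h1 with ⟨r, hr⟩
          exact ⟨r, by rw [sq, hr]⟩
        rw [if_pos hex, h1, hcval]
        push_cast
        ring
      · have hns : ¬ IsSquare (x - z) := quadraticChar_neg_one_iff_not_isSquare.mp h1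
        have hnex : ¬ ∃ w : F, w ^ 2 = x - z := by
          rintro ⟨w, hw⟩
          exact hns ⟨w, by rw [← hw, sq]⟩
        rw [if_neg hnex, h1, hcconj]
        push_cast
        ring
  have hB : ∀ y z : F, (starRingEnd ℂ) (M y z)
      = 1/4 - ((quadraticChar F (y - z) : ℤ) : ℂ) * β + (if y = z then (3/4 : ℂ) else 0) := by
    intro y z
    rw [hA y z, map_add, map_add, _root_.map_mul, hβconj, map_intCast, hconj14]
    rw [show (starRingEnd ℂ) (if y = z then (3/4 : ℂ) else 0) = (if y = z then (3/4 : ℂ) else 0) by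
      split_ifs
      · exact hconj34
      · exact map_zero _]
    ring
  have hsum0 : ∀ w : F, ∑ z : F, ((quadraticChar F (w - z) : ℤ) : ℂ) = 0 := by
    intro w
    have he : ∑ z : F, ((quadraticChar F (w - z) : ℤ) : ℂ)
        = ∑ a : F, ((quadraticChar F a : ℤ) : ℂ) :=
      Fintype.sum_equiv (Equiv.subLeft w) _ _ (fun z => rfl)
    rw [he, ← Int.cast_sum, quadraticChar_sum_zero hF2]
    simp
  have hsum1 : ∀ x y : F, x ≠ y →
      ∑ z : F, ((quadraticChar F (x - z) : ℤ) : ℂ) * ((quadraticChar F (y - z) : ℤ) : ℂ)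
        = -1 := by
    intro x y hxy
    have hd : x - y ≠ 0 := sub_ne_zero.mpr hxy
    have heq : ∑ z : F, ((quadraticChar F (x - z) : ℤ) : ℂ) * ((quadraticChar F (y - z) : ℤ) : ℂ)
        = ∑ a : F, ((quadraticChar F a : ℤ) : ℂ) * ((quadraticChar F (a - (x - y)) : ℤ) : ℂ) := by
      refine Fintype.sum_equiv (Equiv.subLeft x) _ _ (fun z => ?_)
      have h2 : (x - z) - (x - y) = y - z := by ring
      show ((quadraticChar F (x - z) : ℤ) : ℂ) * ((quadraticChar F (y - z) : ℤ) : ℂ)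
        = ((quadraticChar F (x - z) : ℤ) : ℂ) * ((quadraticChar F ((x - z) - (x - y)) : ℤ) : ℂ)
      rw [h2]
    rw [heq,
      show (∑ a : F, ((quadraticChar F a : ℤ) : ℂ) * ((quadraticChar F (a - (x-y)) : ℤ) : ℂ))
        = ((∑ a : F, quadraticChar F a * quadraticChar F (a - (x - y)) : ℤ) : ℂ) by
          push_cast; ring,
      aux_quad_sum hF2 hd]
    simp
  constructor
  · intro i j
    have habs : ‖c‖ = 1 := by
      have hre : c.re = 1/4 := by rw [hc, hβ]; simp
      have him : c.im = Real.sqrt 15 / 4 := by rw [hc, hβ]; simp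
      rw [Complex.norm_def, Complex.normSq_apply, hre, him]
      have h15' : Real.sqrt 15 ^ 2 = 15 := Real.sq_sqrt (by norm_num)
      rw [show (1/4 : ℝ) * (1/4) + Real.sqrt 15 / 4 * (Real.sqrt 15 / 4)
          = (1 + Real.sqrt 15 ^ 2) / 16 by ring, h15']
      norm_num
    rw [hM, Matrix.of_apply]
    split_ifs with h1 h2
    · simp
    · exact habs
    · rw [Complex.norm_conj]; exact habs
  · ext x y
    rw [Matrix.mul_apply]
    simp only [Matrix.conjTranspose_apply, RCLike.star_def, Matrix.smul_apply,
      Matrix.one_apply, smul_eq_mul]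
    by_cases hxy : x = y
    · subst hxy
      have habs1 : ∀ z : F, M x z * (starRingEnd ℂ) (M x z) = 1 := by
        intro z
        rw [hB x z, hA x z]
        by_cases h : x = z
        · subst h; rw [sub_self, hχ0]; simp; norm_num
        · rw [if_neg h]
          have hs : x - z ≠ 0 := sub_ne_zero.mpr h
          have hχsq : ((quadraticChar F (x - z) : ℤ) : ℂ) ^ 2 = 1 := by
            rcases quadraticChar_dichotomy hs with h1 | h1 <;> rw [h1] <;> norm_num
          rw [show (1/4 + ((quadraticChar F (x-z) : ℤ) : ℂ) * β + 0)
              * (1/4 - ((quadraticChar F (x-z) : ℤ) : ℂ) * β + 0)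
              = 1/16 - ((quadraticChar F (x-z) : ℤ) : ℂ)^2 * β^2 by ring, hχsq, hβsq]
          norm_num
      rw [Finset.sum_congr rfl (fun z _ => habs1 z)]
      simp [hcard]
    · rw [if_neg hxy]
      have hterm : ∀ z : F, M x z * (starRingEnd ℂ) (M y z)
          = (1/16 + (((quadraticChar F (x-z) : ℤ) : ℂ) - ((quadraticChar F (y-z) : ℤ) : ℂ))
              * (β/4)
            - (((quadraticChar F (x-z) : ℤ) : ℂ) * ((quadraticChar F (y-z) : ℤ) : ℂ)) * β^2)
            + ((if x = z then ((3/4) * (1/4 - ((quadraticChar F (y-z) : ℤ) : ℂ) * β) : ℂ) else 0)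
            + (if y = z then ((3/4) * (1/4 + ((quadraticChar F (x-z) : ℤ) : ℂ) * β) : ℂ)
                else 0)) := by
        intro z
        rw [hB y z, hA x z]
        by_cases h1 : x = z <;> by_cases h2 : y = z
        · exact absurd (h1.trans h2.symm) hxy
        all_goals
          simp only [h1, h2, eq_self_iff_true, ite_true, ite_false, if_true, if_false]
        all_goals ring
      rw [Finset.sum_congr rfl (fun z _ => hterm z)]
      rw [Finset.sum_add_distrib, Finset.sum_add_distrib, Finset.sum_sub_distrib,
        Finset.sum_add_distrib, ← Finset.sum_mul, ← Finset.sum_mul,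
        Finset.sum_sub_distrib, hsum0 x, hsum0 y, hsum1 x y hxy,
        Finset.sum_const, Finset.card_univ, hcard, Finset.sum_ite_eq, Finset.sum_ite_eq]
      simp only [Finset.mem_univ, if_true, nsmul_eq_mul]
      rw [show ((quadraticChar F (y - x) : ℤ) : ℂ) = ((quadraticChar F (x - y) : ℤ) : ℂ) by
        rw [show y - x = -(x - y) by ring, hχneg], hβsq]
      push_cast
      ring
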